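/- The poset K_κ is σ-closed: for every sequence ⟨p_n : n < ω⟩ of conditions in K_κ with p_{n+1} ≤ p_n for all n, there exists a condition q ∈ K_κ such that q ≤ p_n for all n < ω. -/
import Mathlib


noncomputable section

/-- The first uncountable ordinal. -/
def omega1 : Ordinal.{0} := (Cardinal.aleph 1).ord

/-- Restriction of (the graph of) a partial function on ordinals to arguments below `γ`. -/
def nodeRestrict (s : Set (Ordinal.{0} × Ordinal.{0})) (γ : Ordinal.{0}) :
    Set (Ordinal.{0} × Ordinal.{0}) :=
  {p ∈ s | p.1 < γ}

/-- `s` is (the graph of) a function with domain the ordinal `β` and values in `ω₁`. -/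
def IsFuncOn (s : Set (Ordinal.{0} × Ordinal.{0})) (β : Ordinal.{0}) : Prop :=
  (∀ p ∈ s, p.1 < β ∧ p.2 < omega1) ∧ ∀ γ < β, ∃! v : Ordinal.{0}, (γ, v) ∈ s

/-- A Jech condition: a pair `(t, b)` where `t` is a countable initial segment of an
`ω₁`-tree of sequences with a maximal level `α`, closed under restriction, with all
levels below `α` nonempty and every node extending to the top level; and `b` is a
function (given by its graph) from a countable subset of `κ` into the top level of `t`. -/

lemma funcOn_mem_of_subset {u w : Set (Ordinal.{0} × Ordinal.{0})} {β β' : Ordinal.{0}}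
    (hu : IsFuncOn u β) (hw : IsFuncOn w β') (huw : u ⊆ w) :
    ∀ pr ∈ w, pr.1 < β → pr ∈ u := by
  rintro ⟨γ, v⟩ hpr h
  obtain ⟨v', hv', _⟩ := hu.2 γ h
  have h2 : (γ, v') ∈ w := huw hv'
  have hγ : γ < β' := (hw.1 _ hpr).1
  have : v = v' := (hw.2 γ hγ).unique hpr h2
  rwa [this]

lemma funcOn_restrict_eq {u w : Set (Ordinal.{0} × Ordinal.{0})} {β β' : Ordinal.{0}}
    (hu : IsFuncOn u β) (hw : IsFuncOn w β') (huw : u ⊆ w) :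
    u = nodeRestrict w β := by
  ext pr
  constructor
  · exact fun h => ⟨huw h, (hu.1 _ h).1⟩
  · rintro ⟨h1, h2⟩; exact funcOn_mem_of_subset hu hw huw pr h1 h2

lemma nodeRestrict_restrict (s : Set (Ordinal.{0} × Ordinal.{0})) (γ δ : Ordinal.{0}) :
    nodeRestrict (nodeRestrict s δ) γ = nodeRestrict s (min γ δ) := by
  ext pr; simp only [nodeRestrict, Set.mem_setOf_eq, lt_min_iff]; tauto

lemma restrict_eq_restrict {u w : Set (Ordinal.{0} × Ordinal.{0})} {β β' : Ordinal.{0}}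
    (hu : IsFuncOn u β) (hw : IsFuncOn w β') (huw : u ⊆ w) {γ : Ordinal.{0}} (hγ : γ ≤ β) :
    nodeRestrict u γ = nodeRestrict w γ := by
  rw [funcOn_restrict_eq hu hw huw, nodeRestrict_restrict, min_eq_left hγ]

lemma nodeRestrict_of_funcOn_le {s : Set (Ordinal.{0} × Ordinal.{0})} {β γ : Ordinal.{0}}
    (h : IsFuncOn s β) (hβγ : β ≤ γ) : nodeRestrict s γ = s := by
  ext pr
  exact ⟨fun h' => h'.1, fun h' => ⟨h', lt_of_lt_of_le (h.1 _ h').1 hβγ⟩⟩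

lemma funcOn_le {s : Set (Ordinal.{0} × Ordinal.{0})} {β β' : Ordinal.{0}}
    (h1 : IsFuncOn s β) (h2 : IsFuncOn s β') : β ≤ β' := by
  by_contra hc
  push_neg at hc
  obtain ⟨v, hv, -⟩ := h1.2 β' hc
  exact absurd (h2.1 _ hv).1 (lt_irrefl _)

lemma funcOn_unique {s : Set (Ordinal.{0} × Ordinal.{0})} {β β' : Ordinal.{0}}
    (h1 : IsFuncOn s β) (h2 : IsFuncOn s β') : β = β' :=
  le_antisymm (funcOn_le h1 h2) (funcOn_le h2 h1)


structure JechCond (κ : Cardinal.{0}) where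
  α : Ordinal.{0}
  t : Set (Set (Ordinal.{0} × Ordinal.{0}))
  b : Set (Ordinal.{0} × Set (Ordinal.{0} × Ordinal.{0}))
  hα : α < omega1
  ht_count : t.Countable
  ht_fun : ∀ s ∈ t, ∃ β ≤ α, IsFuncOn s β
  ht_closed : ∀ s ∈ t, ∀ γ : Ordinal.{0}, nodeRestrict s γ ∈ t
  ht_levels : ∀ β < α, ∃ s ∈ t, IsFuncOn s β
  ht_top_ext : ∀ s ∈ t, ∃ s' ∈ t, IsFuncOn s' α ∧ s ⊆ s'
  hb_fun : ∀ x ∈ b, ∀ y ∈ b, x.1 = y.1 → x = y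
  hb_count : (Prod.fst '' b).Countable
  hb_dom : ∀ x ∈ b, x.1 < κ.ord
  hb_val : ∀ x ∈ b, x.2 ∈ t ∧ IsFuncOn x.2 α

/-- The order on `K_κ`: `p ≤ q` iff `α_q ≤ α_p`, `t_q` is the part of `t_p` of levels
`≤ α_q`, `dom b_q ⊆ dom b_p` and `b_q(γ) = b_p(γ) ↾ α_q` for every `γ ∈ dom b_q`. -/
def JechLE {κ : Cardinal.{0}} (p q : JechCond κ) : Prop :=
  q.α ≤ p.α ∧
  q.t = {s ∈ p.t | ∃ β ≤ q.α, IsFuncOn s β} ∧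
  ∀ x ∈ q.b, ∃ y ∈ p.b, x.1 = y.1 ∧ x.2 = nodeRestrict y.2 q.α

/-- Jech's poset `K_κ` is `σ`-closed: every decreasing `ω`-sequence of conditions has a
lower bound. -/

lemma jechLE_refl {κ : Cardinal.{0}} (r : JechCond κ) : JechLE r r := by
  refine ⟨le_rfl, ?_, ?_⟩
  · ext s
    exact ⟨fun h => ⟨h, r.ht_fun s h⟩, fun h => h.1⟩
  · intro x hx
    exact ⟨x, hx, rfl, funcOn_restrict_eq (r.hb_val x hx).2 (r.hb_val x hx).2
      (subset_refl _)⟩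

lemma jechLE_trans {κ : Cardinal.{0}} {r q s : JechCond κ}
    (h1 : JechLE r q) (h2 : JechLE q s) : JechLE r s := by
  obtain ⟨ha1, ht1, hb1⟩ := h1
  obtain ⟨ha2, ht2, hb2⟩ := h2
  refine ⟨le_trans ha2 ha1, ?_, ?_⟩
  · rw [ht2, ht1]
    ext u
    simp only [Set.mem_setOf_eq]
    constructor
    · rintro ⟨⟨hu, -⟩, hf⟩; exact ⟨hu, hf⟩
    · rintro ⟨hu, β, hβ, hf⟩
      exact ⟨⟨hu, β, le_trans hβ ha2, hf⟩, β, hβ, hf⟩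
  · intro x hx
    obtain ⟨y, hy, hxy, hres⟩ := hb2 x hx
    obtain ⟨z, hz, hyz, hres'⟩ := hb1 y hy
    refine ⟨z, hz, hxy.trans hyz, ?_⟩
    rw [hres, hres', nodeRestrict_restrict, min_eq_left ha2]


def jechBhat (κ : Cardinal.{0}) (p : ℕ → JechCond κ) (γ : Ordinal.{0}) :
    Set (Ordinal.{0} × Ordinal.{0}) :=
  {pr | ∃ n : ℕ, ∃ x ∈ (p n).b, x.1 = γ ∧ pr ∈ x.2}

open Classical in
def jechExt (κ : Cardinal.{0}) (p : ℕ → JechCond κ) (n : ℕ)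
    (s : Set (Ordinal.{0} × Ordinal.{0})) : Set (Ordinal.{0} × Ordinal.{0}) :=
  if h : s ∈ (p n).t then ((p n).ht_top_ext s h).choose else s

def jechC (κ : Cardinal.{0}) (p : ℕ → JechCond κ) (m : ℕ)
    (s : Set (Ordinal.{0} × Ordinal.{0})) : ℕ → Set (Ordinal.{0} × Ordinal.{0})
  | 0 => jechExt κ p m s
  | k + 1 => jechExt κ p (m + k + 1) (jechC κ p m s k)

def jechBr (κ : Cardinal.{0}) (p : ℕ → JechCond κ) (m : ℕ)
    (s : Set (Ordinal.{0} × Ordinal.{0})) : Set (Ordinal.{0} × Ordinal.{0}) :=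
  ⋃ k, jechC κ p m s k

theorem jech_sigma_closed (κ : Cardinal.{0}) (hreg : κ.IsRegular)
    (hκ : Cardinal.aleph 2 ≤ κ)
    (p : ℕ → JechCond κ) (hdec : ∀ n : ℕ, JechLE (p (n + 1)) (p n)) :
    ∃ q : JechCond κ, ∀ n : ℕ, JechLE q (p n) := by
  classical
  -- the sequence is decreasing for the derived order facts
  have hle : ∀ m n : ℕ, m ≤ n → JechLE (p n) (p m) := by
    intro m n h
    induction h with
    | refl => exact jechLE_refl _
    | step _ ih => exact jechLE_trans (hdec _) ih
  have hAmono : ∀ {m n : ℕ}, m ≤ n → (p m).α ≤ (p n).α := fun h => (hle _ _ h).1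
  set α : Ordinal.{0} := ⨆ n, (p n).α with hαdef
  have hbdd : BddAbove (Set.range fun n => (p n).α) := Ordinal.bddAbove_range _
  have hAle : ∀ n, (p n).α ≤ α := fun n => le_ciSup hbdd n
  have hltα : ∀ δ < α, ∃ n, δ < (p n).α := by
    intro δ h
    by_contra hc
    push_neg at hc
    exact absurd (ciSup_le hc) (not_le.mpr h)
  have hα : α < omega1 := by
    have hcof : Cardinal.mk ℕ < ((Cardinal.aleph 1).ord).cof := by
      rw [Cardinal.isRegular_aleph_one.cof_eq]
      simpa using Cardinal.aleph0_lt_aleph_one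
    exact Ordinal.iSup_lt_ord hcof fun n => (p n).hα
  have htsub : ∀ {m n : ℕ}, m ≤ n → (p m).t ⊆ (p n).t := by
    intro m n h s hs
    rw [(hle m n h).2.1] at hs
    exact hs.1
  have bcompat : ∀ {m n : ℕ}, m ≤ n → ∀ x ∈ (p m).b, ∀ y ∈ (p n).b, x.1 = y.1 →
      x.2 = nodeRestrict y.2 (p m).α := by
    intro m n h x hx y hy hxy
    obtain ⟨y', hy', h1, h2⟩ := (hle m n h).2.2 x hx
    have hyy : y' = y := (p n).hb_fun y' hy' y hy (h1.symm.trans hxy)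
    rw [h2, hyy]
  have bdomsub : ∀ {m n : ℕ}, m ≤ n → ∀ x ∈ (p m).b, ∃ y ∈ (p n).b, y.1 = x.1 := by
    intro m n h x hx
    obtain ⟨y, hy, h1, -⟩ := (hle m n h).2.2 x hx
    exact ⟨y, hy, h1.symm⟩
  set D : Set Ordinal.{0} := ⋃ n, Prod.fst '' (p n).b with hD
  have hxsubB : ∀ n : ℕ, ∀ x ∈ (p n).b, x.2 ⊆ jechBhat κ p x.1 :=
    fun n x hx pr hpr => ⟨n, x, hx, rfl, hpr⟩
  have hDval : ∀ γ ∈ D, ∀ n₁ : ℕ, ∃ n, n₁ ≤ n ∧ ∃ x ∈ (p n).b, x.1 = γ := by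
    intro γ hγ n₁
    simp only [hD, Set.mem_iUnion, Set.mem_image] at hγ
    obtain ⟨n₀, x₀, hx₀, hx₀γ⟩ := hγ
    obtain ⟨y, hy, hyx⟩ := bdomsub (le_max_left n₀ n₁) x₀ hx₀
    exact ⟨max n₀ n₁, le_max_right _ _, y, hy, hyx.trans hx₀γ⟩
  have hBfun : ∀ γ ∈ D, IsFuncOn (jechBhat κ p γ) α := by
    intro γ hγ
    constructor
    · rintro pr ⟨n, x, hx, -, hpr⟩
      have hf := ((p n).hb_val x hx).2
      exact ⟨lt_of_lt_of_le (hf.1 pr hpr).1 (hAle n), (hf.1 pr hpr).2⟩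
    · intro δ hδ
      obtain ⟨n₁, hn₁⟩ := hltα δ hδ
      obtain ⟨n, hn, x, hx, hxγ⟩ := hDval γ hγ n₁
      have hf := ((p n).hb_val x hx).2
      have hδn : δ < (p n).α := lt_of_lt_of_le hn₁ (hAmono hn)
      obtain ⟨v, hv, -⟩ := hf.2 δ hδn
      refine ⟨v, ⟨n, x, hx, hxγ, hv⟩, ?_⟩
      rintro v' ⟨m, x', hx', hx'γ, hv'⟩
      rcases le_total m n with hmn | hnm
      · have hres := bcompat hmn x' hx' x hx (hx'γ.trans hxγ.symm)
        have hv'2 : (δ, v') ∈ x.2 := by rw [hres] at hv'; exact hv'.1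
        exact (hf.2 δ hδn).unique hv'2 hv
      · have hres := bcompat hnm x hx x' hx' (hxγ.trans hx'γ.symm)
        have hfm := ((p m).hb_val x' hx').2
        have hv2 : (δ, v) ∈ x'.2 := by rw [hres] at hv; exact hv.1
        have hδm : δ < (p m).α := lt_of_lt_of_le hδn (hAmono hnm)
        exact (hfm.2 δ hδm).unique hv' hv2
  have hEspec : ∀ n s, s ∈ (p n).t →
      jechExt κ p n s ∈ (p n).t ∧ IsFuncOn (jechExt κ p n s) (p n).α ∧ s ⊆ jechExt κ p n s := by
    intro n s h
    have hs := ((p n).ht_top_ext s h).choose_spec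
    rw [jechExt, dif_pos h]
    exact ⟨hs.1, hs.2.1, hs.2.2⟩
  have hCspec : ∀ m s, s ∈ (p m).t → ∀ k,
      jechC κ p m s k ∈ (p (m + k)).t ∧ IsFuncOn (jechC κ p m s k) (p (m + k)).α ∧
        s ⊆ jechC κ p m s k := by
    intro m s hs k
    induction k with
    | zero => exact hEspec m s hs
    | succ k ih =>
      have hmem : jechC κ p m s k ∈ (p (m + k + 1)).t := htsub (Nat.le_succ _) ih.1
      have h2 := hEspec (m + k + 1) (jechC κ p m s k) hmem
      exact ⟨h2.1, h2.2.1, ih.2.2.trans h2.2.2⟩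
  have hCmono : ∀ m s, s ∈ (p m).t → ∀ k l, k ≤ l → jechC κ p m s k ⊆ jechC κ p m s l := by
    intro m s hs k l h
    induction h with
    | refl => exact subset_rfl
    | @step l h' ih =>
      have hmem : jechC κ p m s l ∈ (p (m + l + 1)).t :=
        htsub (Nat.le_succ _) (hCspec m s hs l).1
      exact ih.trans (hEspec (m + l + 1) _ hmem).2.2
  have hBrfun : ∀ m s, s ∈ (p m).t → IsFuncOn (jechBr κ p m s) α := by
    intro m s hs
    constructor
    · intro pr hpr
      obtain ⟨k, hk⟩ := Set.mem_iUnion.mp hpr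
      have hf := (hCspec m s hs k).2.1
      exact ⟨lt_of_lt_of_le (hf.1 pr hk).1 (hAle _), (hf.1 pr hk).2⟩
    · intro δ hδ
      obtain ⟨n, hn⟩ := hltα δ hδ
      have hδ' : δ < (p (m + n)).α := lt_of_lt_of_le hn (hAmono (Nat.le_add_left n m))
      have hf := (hCspec m s hs n).2.1
      obtain ⟨v, hv, -⟩ := hf.2 δ hδ'
      refine ⟨v, Set.mem_iUnion.mpr ⟨n, hv⟩, ?_⟩
      intro v' hv'
      obtain ⟨k, hk⟩ := Set.mem_iUnion.mp hv'
      have h1 : (δ, v) ∈ jechC κ p m s (max n k) := hCmono m s hs n _ (le_max_left _ _) hv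
      have h2 : (δ, v') ∈ jechC κ p m s (max n k) := hCmono m s hs k _ (le_max_right _ _) hk
      have hfm := (hCspec m s hs (max n k)).2.1
      have hδ'' : δ < (p (m + max n k)).α :=
        lt_of_lt_of_le hδ' (hAmono (by omega))
      exact (hfm.2 δ hδ'').unique h2 h1
  set Tinf : Set (Set (Ordinal.{0} × Ordinal.{0})) := ⋃ n, (p n).t with hTinf
  set Top : Set (Set (Ordinal.{0} × Ordinal.{0})) :=
    (jechBhat κ p '' D) ∪ ⋃ m, (jechBr κ p m) '' (p m).t with hTop
  have hTopFun : ∀ s ∈ Top, IsFuncOn s α := by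
    rintro s (⟨γ, hγ, rfl⟩ | hs)
    · exact hBfun γ hγ
    · obtain ⟨m, s₀, hs₀, rfl⟩ := by simpa only [Set.mem_iUnion, Set.mem_image] using hs
      exact hBrfun m s₀ hs₀
  have hTopRestrict : ∀ s ∈ Top, ∀ γ < α, nodeRestrict s γ ∈ Tinf := by
    rintro s (⟨γ', hγ', rfl⟩ | hs) γ hγ
    · obtain ⟨n₁, hn₁⟩ := hltα γ hγ
      obtain ⟨n, hn, x, hx, hxγ'⟩ := hDval γ' hγ' n₁
      have hsub : x.2 ⊆ jechBhat κ p γ' := hxγ' ▸ hxsubB n x hx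
      have heq : nodeRestrict x.2 γ = nodeRestrict (jechBhat κ p γ') γ :=
        restrict_eq_restrict ((p n).hb_val x hx).2 (hBfun γ' hγ') hsub
          (le_of_lt (lt_of_lt_of_le hn₁ (hAmono hn)))
      rw [← heq]
      exact Set.mem_iUnion.mpr ⟨n, (p n).ht_closed x.2 ((p n).hb_val x hx).1 γ⟩
    · obtain ⟨m, s₀, hs₀, rfl⟩ := by simpa only [Set.mem_iUnion, Set.mem_image] using hs
      obtain ⟨n₁, hn₁⟩ := hltα γ hγ
      have hC := hCspec m s₀ hs₀ n₁
      have heq : nodeRestrict (jechC κ p m s₀ n₁) γ = nodeRestrict (jechBr κ p m s₀) γ :=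
        restrict_eq_restrict hC.2.1 (hBrfun m s₀ hs₀) (Set.subset_iUnion _ n₁)
          (le_of_lt (lt_of_lt_of_le hn₁ (hAmono (Nat.le_add_left n₁ m))))
      rw [← heq]
      exact Set.mem_iUnion.mpr ⟨m + n₁, (p (m + n₁)).ht_closed _ hC.1 γ⟩
  have hTopLow : ∀ s ∈ Top, ∀ n β, β ≤ (p n).α → IsFuncOn s β → s ∈ (p n).t := by
    intro s hs n β hβ hf
    have hfα : IsFuncOn s α := hTopFun s hs
    have hβα : β = α := funcOn_unique hf hfα
    have hαn : α ≤ (p n).α := hβα ▸ hβ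
    have hAeq : ∀ m, n ≤ m → (p m).α = α :=
      fun m h => le_antisymm (hAle m) (hαn.trans (hAmono h))
    rcases hs with ⟨γ', hγ', rfl⟩ | hs
    · obtain ⟨n', hn', x, hx, hxγ'⟩ := hDval γ' hγ' n
      have hfx := ((p n').hb_val x hx).2
      have hA' : (p n').α = α := hAeq n' hn'
      have hsub : x.2 ⊆ jechBhat κ p γ' := hxγ' ▸ hxsubB n' x hx
      have heq : x.2 = jechBhat κ p γ' := by
        rw [funcOn_restrict_eq hfx (hBfun γ' hγ') hsub, hA',
          nodeRestrict_of_funcOn_le (hBfun γ' hγ') le_rfl]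
      rw [← heq, (hle n n' hn').2.1]
      exact ⟨((p n').hb_val x hx).1, α, hαn, hA' ▸ hfx⟩
    · obtain ⟨m, s₀, hs₀, rfl⟩ := by simpa only [Set.mem_iUnion, Set.mem_image] using hs
      have hC := hCspec m s₀ hs₀ n
      have hA' : (p (m + n)).α = α := hAeq (m + n) (Nat.le_add_left n m)
      have heq : jechC κ p m s₀ n = jechBr κ p m s₀ := by
        rw [funcOn_restrict_eq hC.2.1 (hBrfun m s₀ hs₀) (Set.subset_iUnion _ n), hA',
          nodeRestrict_of_funcOn_le (hBrfun m s₀ hs₀) le_rfl]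
      rw [← heq, (hle n (m + n) (Nat.le_add_left n m)).2.1]
      exact ⟨hC.1, α, hαn, hA' ▸ hC.2.1⟩
  have hDcount : D.Countable := Set.countable_iUnion fun n => (p n).hb_count
  refine ⟨⟨α, Tinf ∪ Top, {x | x.1 ∈ D ∧ x.2 = jechBhat κ p x.1}, hα, ?_, ?_, ?_, ?_, ?_, ?_, ?_, ?_, ?_⟩, ?_⟩
  · -- ht_count
    exact ((Set.countable_iUnion fun n => (p n).ht_count).union
      ((hDcount.image _).union
        (Set.countable_iUnion fun m => ((p m).ht_count).image _)))
  · -- ht_fun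
    rintro s (hs | hs)
    · obtain ⟨n, hn⟩ := Set.mem_iUnion.mp hs
      obtain ⟨β, hβ, hfb⟩ := (p n).ht_fun s hn
      exact ⟨β, hβ.trans (hAle n), hfb⟩
    · exact ⟨α, le_rfl, hTopFun s hs⟩
  · -- ht_closed
    rintro s (hs | hs) γ
    · obtain ⟨n, hn⟩ := Set.mem_iUnion.mp hs
      exact Or.inl (Set.mem_iUnion.mpr ⟨n, (p n).ht_closed s hn γ⟩)
    · rcases lt_or_ge γ α with h | h
      · exact Or.inl (hTopRestrict s hs γ h)
      · rw [nodeRestrict_of_funcOn_le (hTopFun s hs) h]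
        exact Or.inr hs
  · -- ht_levels
    intro β hβ
    obtain ⟨n, hn⟩ := hltα β hβ
    obtain ⟨s, hs, hfb⟩ := (p n).ht_levels β hn
    exact ⟨s, Or.inl (Set.mem_iUnion.mpr ⟨n, hs⟩), hfb⟩
  · -- ht_top_ext
    rintro s (hs | hs)
    · obtain ⟨m, hm⟩ := Set.mem_iUnion.mp hs
      refine ⟨jechBr κ p m s, Or.inr (Or.inr (Set.mem_iUnion.mpr ⟨m, ⟨s, hm, rfl⟩⟩)),
        hBrfun m s hm, ?_⟩
      exact (hCspec m s hm 0).2.2.trans (Set.subset_iUnion _ 0)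
    · exact ⟨s, Or.inr hs, hTopFun s hs, subset_rfl⟩
  · -- hb_fun
    rintro x ⟨hx1, hx2⟩ y ⟨hy1, hy2⟩ hxy
    exact Prod.ext hxy (by rw [hx2, hy2, hxy])
  · -- hb_count
    refine Set.Countable.mono ?_ hDcount
    rintro _ ⟨x, ⟨hx1, -⟩, rfl⟩
    exact hx1
  · -- hb_dom
    rintro x ⟨hx1, -⟩
    obtain ⟨n, y, hy, hyx⟩ := by simpa only [hD, Set.mem_iUnion, Set.mem_image] using hx1
    exact hyx ▸ (p n).hb_dom y hy
  · -- hb_val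
    rintro x ⟨hx1, hx2⟩
    rw [hx2]
    exact ⟨Or.inr (Or.inl ⟨x.1, hx1, rfl⟩), hBfun x.1 hx1⟩
  · -- JechLE q (p n)
    intro n
    refine ⟨hAle n, ?_, ?_⟩
    · ext s
      constructor
      · intro hs
        exact ⟨Or.inl (Set.mem_iUnion.mpr ⟨n, hs⟩), (p n).ht_fun s hs⟩
      · rintro ⟨hmem | hmem, β, hβ, hfb⟩
        · obtain ⟨m, hm⟩ := Set.mem_iUnion.mp hmem
          rcases le_total m n with h | h
          · exact htsub h hm
          · rw [(hle n m h).2.1]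
            exact ⟨hm, β, hβ, hfb⟩
        · exact hTopLow s hmem n β hβ hfb
    · intro x hx
      refine ⟨(x.1, jechBhat κ p x.1),
        ⟨Set.mem_iUnion.mpr ⟨n, ⟨x, hx, rfl⟩⟩, rfl⟩, rfl, ?_⟩
      exact funcOn_restrict_eq ((p n).hb_val x hx).2
        (hBfun x.1 (Set.mem_iUnion.mpr ⟨n, ⟨x, hx, rfl⟩⟩)) (hxsubB n x hx)


end
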